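/- Let G be a convergence group on a compact metrizable space M, let ρ be the quasimetric on the space of distinct triples T = {(a,b,c) ∈ M³ : a ≠ b, b ≠ c, a ≠ c} defined by ρ(x,y) = max over pairs of components of the crossratios (xⁱ,xʲ | yᵏ,yˡ). Let p ∈ M and suppose x = (x¹,x²,x³) ∈ T and p ∈ D_M(x,R), i.e., there is a sequence (xₙ) ⊂ T with ρ(x,xₙ) ≤ R for all n and xₙ → p in Tukia's topology on T ∪ M. Then (xⁱ,xʲ | p) ≤ R for all i ≠ j, where (xⁱ,xʲ|p) denotes ({xⁱ,xʲ}|{p}), the maximal annulus chain length from {xⁱ,xʲ} to {p}. -/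
import Mathlib


open Set Pointwise

section AnnulusSystem

variable {M : Type*} [TopologicalSpace M]

/-- An annulus on `M`: an ordered pair of disjoint closed sets whose union does not cover `M`. -/
def IsAnnulus (A : Set M × Set M) : Prop :=
  IsClosed A.1 ∧ IsClosed A.2 ∧ Disjoint A.1 A.2 ∧ (A.1 ∪ A.2)ᶜ.Nonempty

/-- The relation `A < B` between annuli: `int A⁺ ∪ int B⁻ = M`. -/
def AnnLt (A B : Set M × Set M) : Prop := interior A.2 ∪ interior B.1 = Set.univ

/-- There is a chain `K < A₁ < ⋯ < Aₙ < L` of annuli of `𝒜`. -/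
def HasChain (𝒜 : Set (Set M × Set M)) (K L : Set M) (n : ℕ) : Prop :=
  ∃ c : Fin n → Set M × Set M, (∀ i, c i ∈ 𝒜) ∧
    (∀ i : Fin n, (i : ℕ) = 0 → K ⊆ interior (c i).1) ∧
    (∀ i j : Fin n, (i : ℕ) + 1 = (j : ℕ) → AnnLt (c i) (c j)) ∧
    (∀ i : Fin n, (i : ℕ) + 1 = n → L ⊆ interior (c i).2)

/-- The chain length `(K|L) ∈ ℕ ∪ {∞}`. -/
noncomputable def chainLen (𝒜 : Set (Set M × Set M)) (K L : Set M) : ℕ∞ :=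
  ⨆ (n : ℕ) (_ : HasChain 𝒜 K L n), (n : ℕ∞)

/-- The crossratio `(x,y|z,t) := ({x,y}|{z,t})`. -/
noncomputable def crossratio (𝒜 : Set (Set M × Set M)) (x y z t : M) : ℕ∞ :=
  chainLen 𝒜 {x, y} {z, t}

/-- The symmetric `G`-invariant annulus system generated by a single annulus `A`. -/
def annSys (G : Type*) [Group G] [MulAction G M] (A : Set M × Set M) :
    Set (Set M × Set M) :=
  {B | ∃ g : G, B = (g • A.1, g • A.2) ∨ B = (g • A.2, g • A.1)}

end AnnulusSystem

open Filter in
/-- A group action on a topological space has the convergence property if every sequence of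
distinct elements has a subsequence converging locally uniformly on the complement of a
(repelling) point `a` to a constant (attracting) point `b`. -/
def ConvergenceAction (G M : Type*) [Group G] [TopologicalSpace M] [MulAction G M] : Prop :=
  ∀ g : ℕ → G, Function.Injective g →
    ∃ φ : ℕ → ℕ, StrictMono φ ∧ ∃ a b : M,
      ∀ K : Set M, IsCompact K → K ⊆ {a}ᶜ →
        ∀ U ∈ nhds b, ∀ᶠ n in atTop, (g (φ n)) • K ⊆ U

section Triples

open Filter

variable {M : Type*} [TopologicalSpace M]

/-- The space of distinct triples of `M`. -/
def Tri (M : Type*) : Type _ :=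
  {x : M × M × M // x.1 ≠ x.2.1 ∧ x.2.1 ≠ x.2.2 ∧ x.1 ≠ x.2.2}

/-- The components of a triple. -/
def comp (x : Tri M) : Fin 3 → M := ![x.val.1, x.val.2.1, x.val.2.2]

/-- At least two of the three components of `x` lie in `U`. -/
def TwoIn (U : Set M) (x : Tri M) : Prop :=
  ∃ i j : Fin 3, i ≠ j ∧ comp x i ∈ U ∧ comp x j ∈ U

/-- Convergence of a sequence of distinct triples to a boundary point `p ∈ M` in Tukia's
topology on `T ∪ M`: eventually at least two components lie in any open neighbourhood of `p`. -/
def TukiaTendsto (x : ℕ → Tri M) (p : M) : Prop :=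
  ∀ U : Set M, IsOpen U → p ∈ U → ∀ᶠ n in atTop, TwoIn U (x n)

/-- The quasimetric on the space of distinct triples: the maximum of the crossratios of
pairs of components. -/
noncomputable def rhoT (𝒜 : Set (Set M × Set M)) (x y : Tri M) : ℕ∞ :=
  ⨆ (i : Fin 3) (j : Fin 3) (k : Fin 3) (l : Fin 3) (_ : i ≠ j) (_ : k ≠ l),
    crossratio 𝒜 (comp x i) (comp x j) (comp y k) (comp y l)

/-- `D_M(x,R)`: the points of `M` reachable as Tukia limits of sequences of triples staying
within `ρ`-distance `R` of `x`. -/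
def DM (𝒜 : Set (Set M × Set M)) (x : Tri M) (R : ℕ) : Set M :=
  {p | ∃ xs : ℕ → Tri M, (∀ n, rhoT 𝒜 x (xs n) ≤ (R : ℕ∞)) ∧ TukiaTendsto xs p}

/-- A finite boundary point: a point of `M` which is a Tukia limit of a sequence of triples
at bounded `ρ`-distance from some basepoint. -/
def FiniteBoundaryPoint (𝒜 : Set (Set M × Set M)) (p : M) : Prop :=
  ∃ (x₀ : Tri M) (xs : ℕ → Tri M) (R : ℕ),
    (∀ n, rhoT 𝒜 x₀ (xs n) ≤ (R : ℕ∞)) ∧ TukiaTendsto xs p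

end Triples

theorem chainlen_le_of_mem_DM
    {G M : Type*} [Group G] [Countable G] [TopologicalSpace M]
    [CompactSpace M] [TopologicalSpace.MetrizableSpace M] [MulAction G M]
    (hcont : ∀ g : G, Continuous fun m : M => g • m)
    (hconv : ConvergenceAction G M)
    (A : Set M × Set M) (hA : IsAnnulus A)
    (x : Tri M) (R : ℕ) (p : M) (hp : p ∈ DM (annSys G A) x R) :
    ∀ i j : Fin 3, i ≠ j → chainLen (annSys G A) {comp x i, comp x j} {p} ≤ (R : ℕ∞) := by
  obtain ⟨xs, hxs, htk⟩ := hp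
  intro i j hij
  refine iSup_le fun n => iSup_le fun hn => ?_
  rcases Nat.eq_zero_or_pos n with h0 | hpos
  · simp [h0]
  obtain ⟨c, hc𝒜, hK, hlt, hL⟩ := hn
  have hlt' : n - 1 < n := Nat.sub_lt hpos one_pos
  have hlast : ((⟨n - 1, hlt'⟩ : Fin n) : ℕ) + 1 = n := Nat.succ_pred_eq_of_pos hpos
  have hpU : p ∈ interior (c ⟨n - 1, hlt'⟩).2 :=
    Set.singleton_subset_iff.mp (hL _ hlast)
  obtain ⟨m, k, l, hkl, hk, hl⟩ := ((htk _ isOpen_interior hpU).exists :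
    ∃ m, TwoIn (interior (c ⟨n - 1, hlt'⟩).2) (xs m))
  have hchain : HasChain (annSys G A) {comp x i, comp x j}
      {comp (xs m) k, comp (xs m) l} n := by
    refine ⟨c, hc𝒜, hK, hlt, fun i' hi' => ?_⟩
    have : i' = ⟨n - 1, hlt'⟩ := by
      apply Fin.ext
      omega
    subst this
    intro z hz
    simp only [Set.mem_insert_iff, Set.mem_singleton_iff] at hz
    rcases hz with rfl | rfl
    · exact hk
    · exact hl
  have h1 : (n : ℕ∞) ≤ crossratio (annSys G A) (comp x i) (comp x j)
      (comp (xs m) k) (comp (xs m) l) :=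
    le_iSup₂ (f := fun n (_ : HasChain (annSys G A) {comp x i, comp x j}
      {comp (xs m) k, comp (xs m) l} n) => (n : ℕ∞)) n hchain
  have h2 : crossratio (annSys G A) (comp x i) (comp x j)
      (comp (xs m) k) (comp (xs m) l) ≤ rhoT (annSys G A) x (xs m) :=
    le_iSup_of_le i <| le_iSup_of_le j <| le_iSup_of_le k <| le_iSup_of_le l <|
      le_iSup_of_le hij <| le_iSup_of_le hkl le_rfl
  exact h1.trans (h2.trans (hxs m))
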